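/- Let c, c' ∈ {0,1}^n share a common subsequence of length n-2. If 𝟙_{10}(c) = 𝟙_{10}(c') and 𝟙_{01}(c) = 𝟙_{01}(c'), then c = c'. -/
import Mathlib

def ind10 (c : List Bool) : List Bool := List.zipWith (fun a b => a && !b) c c.tail

def ind01 (c : List Bool) : List Bool := List.zipWith (fun a b => !a && b) c c.tail

lemma lemA : ∀ (c c' : List Bool), c.length = c'.length → ind10 c = ind10 c' →
    ind01 c = ind01 c' → c = c' ∨ c = c'.map (fun x => !x) := by
  intro c
  induction c with
  | nil => intro c' hl _ _; left; symm; exact List.length_eq_zero_iff.mp hl.symm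
  | cons a t ih =>
    intro c' hl h10 h01
    match c', t with
    | a' :: t', [] =>
      simp at hl
      have : t' = [] := by cases t' <;> simp_all
      subst this
      cases a <;> cases a' <;> simp
    | a' :: b' :: t', b :: u =>
      simp [ind10, ind01] at h10 h01 ⊢
      obtain ⟨h1, h2⟩ := h10
      obtain ⟨h3, h4⟩ := h01
      simp at hl
      have := ih (b' :: t') (by simpa using hl) (by simpa [ind10] using h2)
        (by simpa [ind01] using h4)
      rcases this with he | he
      · left
        have hb : b = b' := by simpa using congrArg (fun l => l.headI) he
        subst hb
        injection he with he1 he2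
        refine ⟨?_, rfl, he2⟩
        cases a <;> cases a' <;> cases b <;> revert h1 h3 <;> decide
      · right
        have hb : b = !b' := by simpa using congrArg (fun l => l.headI) he
        subst hb
        injection he with he1 he2
        refine ⟨?_, rfl, by simpa using he2⟩
        cases a <;> cases a' <;> cases b' <;> revert h1 h3 <;> decide
    | a' :: [], b :: u => simp at hl

lemma lemD : ∀ (c : List Bool), ind10 (c.map (fun x => !x)) = ind10 c →
    ∃ v, c = List.replicate c.length v := by
  intro c
  induction c with
  | nil => exact fun _ => ⟨true, rfl⟩
  | cons a t ih =>
    intro h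
    match t, h with
    | [], _ => exact ⟨a, rfl⟩
    | b :: u, h =>
      simp [ind10] at h
      obtain ⟨h1, h2⟩ := h
      have hab : a = b := by cases a <;> cases b <;> simp_all
      obtain ⟨v, hv⟩ := ih (by simpa [ind10] using h2)
      have hbv : b = v := by
        have := congrArg (fun l => l.headI) hv
        simpa [List.replicate] using this
      refine ⟨v, ?_⟩
      have h3 : b :: u = List.replicate (u.length + 1) v := by simpa using hv
      calc a :: b :: u = v :: (b :: u) := by rw [hab, hbv]
        _ = List.replicate (a :: b :: u).length v := by
            rw [h3]; simp [List.replicate_succ]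

theorem stmt13 (n : ℕ) (c c' : List Bool) (hn : 3 ≤ n)
    (hc : c.length = n) (hc' : c'.length = n)
    (h : ∃ e : List Bool, e.length = n - 2 ∧ e.Sublist c ∧ e.Sublist c')
    (h10 : ind10 c = ind10 c') (h01 : ind01 c = ind01 c') :
    c = c' := by
  rcases lemA c c' (by omega) h10 h01 with he | he
  · exact he
  · exfalso
    obtain ⟨v, hv⟩ := lemD c' (by rw [← he]; exact h10)
    rw [hc'] at hv
    obtain ⟨e, hel, hec, hec'⟩ := h
    rw [hv] at hec'
    rw [he, hv] at hec
    simp [List.map_replicate] at hec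
    have h1 := (List.sublist_replicate_iff.mp hec)
    have h2 := (List.sublist_replicate_iff.mp hec')
    obtain ⟨k1, _, hk1⟩ := h1
    obtain ⟨k2, _, hk2⟩ := h2
    have hk1' : k1 = n - 2 := by rw [hk1] at hel; simpa using hel
    have hk2' : k2 = n - 2 := by rw [hk2] at hel; simpa using hel
    subst hk1' hk2'
    obtain ⟨m, hm⟩ : ∃ m, n - 2 = m + 1 := ⟨n - 3, by omega⟩
    rw [hm, List.replicate_succ] at hk1 hk2
    have := hk1.symm.trans hk2
    simp at this
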